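/- arXiv:0811.3559 — 7 statements merged into one kernel-verified Lean document; each statement's English description precedes it below -/
import Mathlib

section
/- Let k > 0 and define φ₁(x) = x + k + 1. Then φ₁ is a solution of the homogeneous Sturm–Liouville equation with spectral parameter λ = 0: for all x ∈ (0,∞), -(p_k·φ₁')'(x) + q_k(x)·φ₁(x) = 0. -/
open Real Set

/-- For `k > 0`, `φ₁(x) = x + k + 1` solves the homogeneous Sturm–Liouville
equation `-(p_k·φ₁')'(x) + q_k(x)·φ₁(x) = 0` on `(0,∞)`, where
`p_k(x) = x^(k+1) e^(-x)/(x+k)^2` and `q_k(x) = -(x-k) x^k e^(-x)/(x+k)^3`. -/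
theorem x1_laguerre_phi1_solution (k : ℝ) (hk : 0 < k)
    (φ₁ : ℝ → ℝ) (hφ₁ : ∀ x : ℝ, φ₁ x = x + k + 1)
    (x : ℝ) (hx : x ∈ Set.Ioi (0 : ℝ)) :
    -(deriv (fun t : ℝ => (t ^ (k + 1) * Real.exp (-t) / (t + k) ^ 2) * deriv φ₁ t) x)
        + (-((x - k) * x ^ k * Real.exp (-x) / (x + k) ^ 3)) * φ₁ x = 0 := by
  have hx0 : 0 < x := hx
  have hφ : φ₁ = fun t => t + k + 1 := funext hφ₁
  have hder1 : ∀ t : ℝ, deriv φ₁ t = 1 := by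
    intro t; rw [hφ]; simp
  have hfun : (fun t : ℝ => (t ^ (k + 1) * Real.exp (-t) / (t + k) ^ 2) * deriv φ₁ t)
      = fun t : ℝ => t ^ (k + 1) * Real.exp (-t) / (t + k) ^ 2 := by
    funext t; rw [hder1 t, mul_one]
  have hxk : 0 < x + k := by linarith
  have h1 : HasDerivAt (fun t : ℝ => t ^ (k + 1)) ((k + 1) * x ^ k) x := by
    have := Real.hasDerivAt_rpow_const (x := x) (p := k + 1) (Or.inl (ne_of_gt hx0))
    simpa using this
  have h2 : HasDerivAt (fun t : ℝ => Real.exp (-t)) (-Real.exp (-x)) x := by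
    simpa using (hasDerivAt_neg x).exp
  have hnum : HasDerivAt (fun t : ℝ => t ^ (k + 1) * Real.exp (-t))
      ((k + 1) * x ^ k * Real.exp (-x) + x ^ (k + 1) * (-Real.exp (-x))) x := h1.mul h2
  have h3 : HasDerivAt (fun t : ℝ => (t + k) ^ 2) (2 * (x + k)) x := by
    have := ((hasDerivAt_id x).add_const k).fun_pow 2
    simpa using this
  have hden : ((x + k) ^ 2 : ℝ) ≠ 0 := by positivity
  have hD : HasDerivAt (fun t : ℝ => t ^ (k + 1) * Real.exp (-t) / (t + k) ^ 2)
      ((((k + 1) * x ^ k * Real.exp (-x) + x ^ (k + 1) * (-Real.exp (-x))) * (x + k) ^ 2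
        - x ^ (k + 1) * Real.exp (-x) * (2 * (x + k))) / ((x + k) ^ 2) ^ 2) x :=
    hnum.div h3 hden
  rw [hfun, hD.deriv, hφ₁ x]
  have hxk1 : x ^ (k + 1) = x ^ k * x := Real.rpow_add_one (ne_of_gt hx0) k
  rw [hxk1]
  have hxkne : (x + k : ℝ) ≠ 0 := ne_of_gt hxk
  field_simp
  ring
end

section
/- Let k > 0, φ₁(x) = x + k + 1, and φ₂(x) = φ₁(x) · ∫₁^x (t+k)² e^t / ((t+k+1)² t^{k+1}) dt. If y : ℝ → ℝ is twice differentiable on (0,∞) and satisfies -(p_k·y')'(x) + q_k(x)·y(x) = 0 for all x ∈ (0,∞), then there exist constants c₁, c₂ ∈ ℝ such that y(x) = c₁ φ₁(x) + c₂ φ₂(x) for all x ∈ (0,∞); that is, {φ₁, φ₂} is a fundamental system of solutions of the homogeneous Sturm–Liouville equation. -/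
open Real Set MeasureTheory intervalIntegral

/-- Helper: a function with vanishing derivative on `(0,∞)` is constant there. -/
lemma x1_const_of_deriv_zero {F : ℝ → ℝ}
    (h : ∀ x ∈ Set.Ioi (0 : ℝ), HasDerivAt F 0 x) {x : ℝ} (hx : 0 < x) : F x = F 1 := by
  apply (convex_Ioi (0 : ℝ)).is_const_of_fderivWithin_eq_zero
    (fun t ht => ((h t ht).differentiableAt).differentiableWithinAt)
    (fun t ht => ?_) hx (by norm_num : (1 : ℝ) ∈ Set.Ioi (0 : ℝ))
  rw [fderivWithin_of_isOpen isOpen_Ioi ht, (h t ht).hasFDerivAt.fderiv]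
  ext
  simp

/-- Helper: derivative of the Sturm–Liouville weight `p_k`. -/
lemma x1_hasDerivAt_p (k : ℝ) (hk : 0 < k) {x : ℝ} (hx : 0 < x) :
    HasDerivAt (fun t : ℝ => t ^ (k + 1) * Real.exp (-t) / (t + k) ^ 2)
      (-((x - k) * x ^ k * Real.exp (-x) / (x + k) ^ 3) * (x + k + 1)) x := by
  have hxk : x + k ≠ 0 := by positivity
  have h1 : HasDerivAt (fun t : ℝ => t ^ (k + 1)) ((k + 1) * x ^ (k + 1 - 1)) x :=
    Real.hasDerivAt_rpow_const (Or.inl hx.ne')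
  have h2 : HasDerivAt (fun t : ℝ => Real.exp (-t)) (-Real.exp (-x)) x := by
    simpa using (hasDerivAt_neg x).exp
  have h3 : HasDerivAt (fun t : ℝ => (t + k) ^ 2) (2 * (x + k) ^ 1 * 1) x :=
    ((hasDerivAt_id x).add_const k).pow 2
  have h := (h1.mul h2).div h3 (pow_ne_zero 2 hxk)
  simp only [Pi.mul_def, Pi.div_def] at h
  convert h using 1
  case e'_4 => rfl
  case e'_5 => rfl
  have e1 : x ^ (k + 1) = x ^ k * x := by
    rw [Real.rpow_add hx, Real.rpow_one]
  have e2 : x ^ (k + 1 - 1) = x ^ k := by norm_num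
  rw [e1, e2]
  field_simp
  ring

/-- Helper: continuity of the reduction-of-order integrand. -/
lemma x1_continuousOn_f (k : ℝ) (hk : 0 < k) :
    ContinuousOn (fun t : ℝ => (t + k) ^ 2 * Real.exp t / ((t + k + 1) ^ 2 * t ^ (k + 1)))
      (Set.Ioi 0) := by
  apply ContinuousOn.div
  · exact ((by continuity : Continuous fun t : ℝ => (t + k) ^ 2).mul
      Real.continuous_exp).continuousOn
  · exact (by continuity : Continuous fun t : ℝ => (t + k + 1) ^ 2).continuousOn.mul
      (fun t ht => (Real.continuousAt_rpow_const t (k + 1)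
        (Or.inl (ne_of_gt ht))).continuousWithinAt)
  · intro t ht
    have ht' : (0 : ℝ) < t := ht
    positivity

/-- For `k > 0`, the pair `φ₁(x) = x + k + 1` and
`φ₂(x) = (x+k+1) · ∫₁^x (t+k)² e^t / ((t+k+1)² t^(k+1)) dt` is a fundamental
system for the homogeneous Sturm–Liouville equation: every function `y` twice
differentiable on `(0,∞)` satisfying `-(p_k·y')'(x) + q_k(x)·y(x) = 0` on
`(0,∞)` is of the form `y = c₁ φ₁ + c₂ φ₂` on `(0,∞)`, where
`p_k(x) = x^(k+1) e^(-x)/(x+k)^2` and `q_k(x) = -(x-k) x^k e^(-x)/(x+k)^3`. -/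
theorem x1_laguerre_fundamental_system (k : ℝ) (hk : 0 < k)
    (φ₁ φ₂ : ℝ → ℝ) (hφ₁ : ∀ x : ℝ, φ₁ x = x + k + 1)
    (hφ₂ : ∀ x : ℝ, φ₂ x = (x + k + 1) *
      ∫ t in (1 : ℝ)..x, (t + k) ^ 2 * Real.exp t / ((t + k + 1) ^ 2 * t ^ (k + 1)))
    (y : ℝ → ℝ)
    (hy : ∀ x ∈ Set.Ioi (0 : ℝ), DifferentiableAt ℝ y x)
    (hy' : ∀ x ∈ Set.Ioi (0 : ℝ), DifferentiableAt ℝ (deriv y) x)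
    (heq : ∀ x ∈ Set.Ioi (0 : ℝ),
      -(deriv (fun t : ℝ => (t ^ (k + 1) * Real.exp (-t) / (t + k) ^ 2) * deriv y t) x)
        + (-((x - k) * x ^ k * Real.exp (-x) / (x + k) ^ 3)) * y x = 0) :
    ∃ c₁ c₂ : ℝ, ∀ x ∈ Set.Ioi (0 : ℝ), y x = c₁ * φ₁ x + c₂ * φ₂ x := by
  set p : ℝ → ℝ := fun t : ℝ => t ^ (k + 1) * Real.exp (-t) / (t + k) ^ 2 with hp_def
  set q : ℝ → ℝ := fun t : ℝ => -((t - k) * t ^ k * Real.exp (-t) / (t + k) ^ 3) with hq_def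
  set f : ℝ → ℝ :=
    fun t : ℝ => (t + k) ^ 2 * Real.exp t / ((t + k + 1) ^ 2 * t ^ (k + 1)) with hf_def
  -- the product p * y' and its derivative
  have hu : ∀ x ∈ Set.Ioi (0 : ℝ),
      HasDerivAt (fun t => p t * deriv y t) (q x * y x) x := by
    intro x hx
    have hx0 : (0 : ℝ) < x := hx
    have hpd := (x1_hasDerivAt_p k hk hx0).differentiableAt.mul (hy' x hx)
    have := hpd.hasDerivAt
    simp only [Pi.mul_def] at this
    have hval : deriv (fun t => p t * deriv y t) x = q x * y x := by
      have h := heq x hx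
      simp only [hp_def, hq_def] at *
      linarith
    rwa [hval] at this
  -- the Wronskian-type function W is constant
  set W : ℝ → ℝ := fun t => (t + k + 1) * (p t * deriv y t) - y t * p t with hW_def
  have hW : ∀ x ∈ Set.Ioi (0 : ℝ), HasDerivAt W 0 x := by
    intro x hx
    have hx0 : (0 : ℝ) < x := hx
    have h1 : HasDerivAt (fun t : ℝ => t + k + 1) 1 x := by
      simpa using ((hasDerivAt_id x).add_const k).add_const 1
    have h2 := h1.mul (hu x hx)
    have h3 := ((hy x hx).hasDerivAt).mul (x1_hasDerivAt_p k hk hx0)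
    have h4 := h2.sub h3
    simp only [Pi.mul_def, Pi.sub_def] at h4
    convert h4 using 1
    case e'_4 => rfl
    case e'_5 => rfl
    show (0 : ℝ) = 1 * (p x * deriv y x) + (x + k + 1) * (q x * y x)
      - (deriv y x * p x + y x * (q x * (x + k + 1)))
    ring
  have hWc : ∀ x ∈ Set.Ioi (0 : ℝ), W x = W 1 := fun x hx => x1_const_of_deriv_zero hW hx
  set c : ℝ := W 1 with hc_def
  -- positivity facts
  have hφpos : ∀ x : ℝ, 0 < x → (0 : ℝ) < x + k + 1 := fun x hx => by positivity
  -- the reduced function g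
  set g : ℝ → ℝ := fun x => y x / (x + k + 1) - c * ∫ t in (1 : ℝ)..x, f t with hg_def
  have hcont := x1_continuousOn_f k hk
  have hg : ∀ x ∈ Set.Ioi (0 : ℝ), HasDerivAt g 0 x := by
    intro x hx
    have hx0 : (0 : ℝ) < x := hx
    have hφx : (x + k + 1) ≠ 0 := (hφpos x hx0).ne'
    have h1 : HasDerivAt (fun t : ℝ => t + k + 1) 1 x := by
      simpa using ((hasDerivAt_id x).add_const k).add_const 1
    have hdiv := ((hy x hx).hasDerivAt).div h1 hφx
    -- FTC part
    have hsub : Set.uIcc (1 : ℝ) x ⊆ Set.Ioi 0 := fun t ht =>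
      lt_of_lt_of_le (lt_min one_pos hx0) ht.1
    have hint : IntervalIntegrable f volume 1 x :=
      (hcont.mono hsub).intervalIntegrable
    have hmeas := hcont.stronglyMeasurableAtFilter (μ := volume) isOpen_Ioi x hx
    have hcx : ContinuousAt f x :=
      (hcont.continuousAt (isOpen_Ioi.mem_nhds hx))
    have hftc := intervalIntegral.integral_hasDerivAt_right hint hmeas hcx
    have h4 := hdiv.sub ((hftc.const_mul c))
    simp only [Pi.div_def, Pi.sub_def] at h4
    convert h4 using 1
    case e'_4 => rfl
    case e'_5 => rfl
    -- show 0 = (y' * φ₁ - y * 1)/φ₁² - c * f x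
    have hcW : c = (x + k + 1) * (p x * deriv y x) - y x * p x := (hWc x hx).symm
    have hxk : (x + k) ≠ 0 := by positivity
    have hrp : (0 : ℝ) < x ^ (k + 1) := Real.rpow_pos_of_pos hx0 _
    have hexp : Real.exp (-x) = (Real.exp x)⁻¹ := Real.exp_neg x
    rw [hcW]
    show (0 : ℝ) = (deriv y x * (x + k + 1) - y x * 1) / (x + k + 1) ^ 2
      - ((x + k + 1) * (p x * deriv y x) - y x * p x) * f x
    simp only [hp_def, hf_def, hexp]
    have hexppos : (0 : ℝ) < Real.exp x := Real.exp_pos x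
    field_simp
    ring
  have hgc : ∀ x ∈ Set.Ioi (0 : ℝ), g x = g 1 := fun x hx => x1_const_of_deriv_zero hg hx
  refine ⟨y 1 / (1 + k + 1), c, fun x hx => ?_⟩
  have hx0 : (0 : ℝ) < x := hx
  have hφx : (x + k + 1) ≠ 0 := (hφpos x hx0).ne'
  have hgx := hgc x hx
  have hg1 : g 1 = y 1 / (1 + k + 1) := by
    simp [hg_def, intervalIntegral.integral_same]
  rw [hg1] at hgx
  rw [hφ₁, hφ₂]
  have : y x / (x + k + 1) = y 1 / (1 + k + 1) + c * ∫ t in (1 : ℝ)..x, f t := by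
    simp only [hg_def] at hgx
    linarith
  have := (div_eq_iff hφx).mp this
  rw [this]
  ring
end

section
/- Let k > 0 and φ₂(x) = (x+k+1) · ∫₁^x (t+k)² e^t / ((t+k+1)² t^{k+1}) dt. Then φ₂ does not belong to L²([1,∞); w_k); that is, ∫₁^∞ φ₂(x)² · x^k e^{-x}/(x+k)² dx = ∞. -/
open Real Set MeasureTheory intervalIntegral

lemma aux_cont (k : ℝ) :
    ContinuousOn (fun t : ℝ => (t + k) ^ 2 * Real.exp t / ((t + k + 1) ^ 2 * t ^ (k + 1)))
      {t : ℝ | 0 < t ∧ 0 < t + k ∧ 0 < t + k + 1} := by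
  intro t ht
  obtain ⟨ht0, ht1, ht2⟩ := ht
  apply ContinuousAt.continuousWithinAt
  have h1 : ContinuousAt (fun t : ℝ => t ^ (k + 1)) t :=
    Real.continuousAt_rpow_const t (k+1) (Or.inl (ne_of_gt ht0))
  have h2 : ContinuousAt (fun t : ℝ => (t + k) ^ 2 * Real.exp t) t := by fun_prop
  have h3 : ContinuousAt (fun t : ℝ => (t + k + 1) ^ 2) t := by fun_prop
  exact h2.div (h3.mul h1) (by positivity)

lemma aux_int (k x : ℝ) (hk : 0 < k) (hx : 2 ≤ x) :
    ((1 + k) / (2 + k)) ^ 2 * Real.exp (x - 1) / x ^ (k + 1) ≤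
      ∫ t in (1 : ℝ)..x, (t + k) ^ 2 * Real.exp t / ((t + k + 1) ^ 2 * t ^ (k + 1)) := by
  set f : ℝ → ℝ := fun t => (t + k) ^ 2 * Real.exp t / ((t + k + 1) ^ 2 * t ^ (k + 1)) with hf
  set c : ℝ := ((1 + k) / (2 + k)) ^ 2 * Real.exp (x - 1) / x ^ (k + 1) with hc
  have hsub : ∀ a b : ℝ, 1 ≤ a → Set.uIcc a b ⊆ {t : ℝ | 0 < t ∧ 0 < t + k ∧ 0 < t + k + 1} → True := fun _ _ _ _ => trivial
  have hset : ∀ t : ℝ, 1 ≤ t → t ∈ {t : ℝ | 0 < t ∧ 0 < t + k ∧ 0 < t + k + 1} := by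
    intro t ht; exact ⟨by linarith, by linarith, by linarith⟩
  have hint : ∀ a b : ℝ, 1 ≤ a → a ≤ b → IntervalIntegrable f volume a b := by
    intro a b ha hab
    apply ContinuousOn.intervalIntegrable
    apply (aux_cont k).mono
    intro t ht
    rw [Set.uIcc_of_le hab] at ht
    exact hset t (le_trans ha ht.1)
  -- pointwise bound on [x-1, x]
  have hpt : ∀ t ∈ Set.Icc (x - 1) x, c ≤ f t := by
    intro t ht
    have ht1 : 1 ≤ t := by linarith [ht.1]
    have ht0 : 0 < t := by linarith
    have hx0 : (0:ℝ) < x := by linarith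
    have hfeq : f t = ((t + k) / (t + k + 1)) ^ 2 * (Real.exp t / t ^ (k + 1)) := by
      rw [hf]; simp only []
      rw [div_pow]
      field_simp
    rw [hfeq, hc]
    have h1 : ((1 + k) / (2 + k)) ^ 2 ≤ ((t + k) / (t + k + 1)) ^ 2 := by
      apply pow_le_pow_left₀ (by positivity)
      rw [div_le_div_iff₀ (by positivity) (by positivity)]
      nlinarith
    have h2 : Real.exp (x - 1) / x ^ (k + 1) ≤ Real.exp t / t ^ (k + 1) := by
      apply div_le_div₀ (le_of_lt (Real.exp_pos t)) (Real.exp_le_exp.2 (by linarith [ht.1]))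
        (by positivity)
      exact Real.rpow_le_rpow (le_of_lt ht0) ht.2 (by positivity)
    calc ((1 + k) / (2 + k)) ^ 2 * Real.exp (x - 1) / x ^ (k + 1)
        = ((1 + k) / (2 + k)) ^ 2 * (Real.exp (x - 1) / x ^ (k + 1)) := by ring
      _ ≤ ((t + k) / (t + k + 1)) ^ 2 * (Real.exp t / t ^ (k + 1)) := by
          apply mul_le_mul h1 h2 (by positivity) (by positivity)
  have hsplit : (∫ t in (1:ℝ)..x, f t) =
      (∫ t in (1:ℝ)..(x-1), f t) + ∫ t in (x-1)..x, f t :=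
    (integral_add_adjacent_intervals (hint 1 (x-1) le_rfl (by linarith))
      (hint (x-1) x (by linarith) (by linarith))).symm
  have h1 : (0:ℝ) ≤ ∫ t in (1:ℝ)..(x-1), f t := by
    apply intervalIntegral.integral_nonneg (by linarith)
    intro u hu
    have : 0 < u := by linarith [hu.1]
    rw [hf]; positivity
  have h2 : c ≤ ∫ t in (x-1)..x, f t := by
    have := intervalIntegral.integral_mono_on (a := x-1) (b := x) (by linarith)
      (_root_.intervalIntegrable_const (c := c)) (hint (x-1) x (by linarith) (by linarith)) hpt
    rw [intervalIntegral.integral_const] at this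
    simpa using this
  linarith [hsplit, h1, h2]

lemma aux_lb (k x : ℝ) (hk : 0 < k) (hx : 2 ≤ x) :
    ((1 + k) / (2 + k)) ^ 4 * Real.exp (-2) * (Real.exp x / x ^ (k + 2)) ≤
      ((x + k + 1) * ∫ t in (1 : ℝ)..x,
          (t + k) ^ 2 * Real.exp t / ((t + k + 1) ^ 2 * t ^ (k + 1))) ^ 2 *
        (x ^ k * Real.exp (-x) / (x + k) ^ 2) := by
  have hx0 : (0:ℝ) < x := by linarith
  set q : ℝ := ((1 + k) / (2 + k)) ^ 2 with hq
  set L : ℝ := q * Real.exp (x - 1) / x ^ (k + 1) with hL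
  have hq0 : 0 < q := by rw [hq]; positivity
  have hL0 : 0 ≤ L := by rw [hL]; positivity
  have hI := aux_int k x hk hx
  set I : ℝ := ∫ t in (1 : ℝ)..x,
      (t + k) ^ 2 * Real.exp t / ((t + k + 1) ^ 2 * t ^ (k + 1)) with hIdef
  have hstep1 : ((x + k + 1) * L) ^ 2 ≤ ((x + k + 1) * I) ^ 2 := by
    apply pow_le_pow_left₀ (by positivity)
    apply mul_le_mul_of_nonneg_left hI (by linarith)
  have hw0 : 0 ≤ x ^ k * Real.exp (-x) / (x + k) ^ 2 := by positivity
  have key : ((x + k + 1) * L) ^ 2 * (x ^ k * Real.exp (-x) / (x + k) ^ 2)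
      = (q ^ 2 * Real.exp (-2) * (Real.exp x / x ^ (k + 2))) * ((x + k + 1) / (x + k)) ^ 2 := by
    have hid : x ^ (k + 1) * x ^ (k + 1) = x ^ (k + 2) * x ^ k := by
      rw [← Real.rpow_add hx0, ← Real.rpow_add hx0]; ring_nf
    have hE : Real.exp (x - 1) * (Real.exp (x - 1) * Real.exp (-x))
        = Real.exp (-2) * Real.exp x := by
      rw [← Real.exp_add, ← Real.exp_add, ← Real.exp_add]; ring_nf
    have hA : (0:ℝ) < x ^ (k + 1) := by positivity
    have hB : (0:ℝ) < x ^ k := by positivity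
    have hC : (0:ℝ) < x ^ (k + 2) := by positivity
    have hxk : (0:ℝ) < x + k := by linarith
    rw [hL]
    have hid2 : (x ^ (k + 1)) ^ 2 = x ^ (k + 2) * x ^ k := by rw [sq]; exact hid
    have hE2 : Real.exp (x - 1) ^ 2 * Real.exp (-x) = Real.exp (-2) * Real.exp x := by
      rw [sq, mul_assoc]; exact hE
    calc ((x + k + 1) * (q * Real.exp (x - 1) / x ^ (k + 1))) ^ 2
          * (x ^ k * Real.exp (-x) / (x + k) ^ 2)
        = (x + k + 1) ^ 2 * q ^ 2 * (Real.exp (x - 1) ^ 2 * Real.exp (-x)) * x ^ k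
          * ((x ^ (k + 1)) ^ 2)⁻¹ * ((x + k) ^ 2)⁻¹ := by ring
      _ = _ := by
        rw [hE2, hid2]
        field_simp
  have hratio : (1:ℝ) ≤ ((x + k + 1) / (x + k)) ^ 2 := by
    apply one_le_pow₀
    rw [le_div_iff₀ (by linarith)]; linarith
  calc ((1 + k) / (2 + k)) ^ 4 * Real.exp (-2) * (Real.exp x / x ^ (k + 2))
      = q ^ 2 * Real.exp (-2) * (Real.exp x / x ^ (k + 2)) := by rw [hq]; ring
    _ ≤ (q ^ 2 * Real.exp (-2) * (Real.exp x / x ^ (k + 2))) * ((x + k + 1) / (x + k)) ^ 2 :=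
        le_mul_of_one_le_right (by positivity) hratio
    _ = ((x + k + 1) * L) ^ 2 * (x ^ k * Real.exp (-x) / (x + k) ^ 2) := key.symm
    _ ≤ ((x + k + 1) * I) ^ 2 * (x ^ k * Real.exp (-x) / (x + k) ^ 2) :=
        mul_le_mul_of_nonneg_right hstep1 hw0

/-- For `k > 0`, the second solution
`φ₂(x) = (x+k+1) · ∫₁^x (t+k)² e^t / ((t+k+1)² t^(k+1)) dt` is not in
`L²([1,∞); w_k)` with `w_k(x) = x^k e^(-x)/(x+k)^2`; that is,
`∫₁^∞ φ₂(x)² · x^k e^(-x)/(x+k)² dx = ∞`. -/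
theorem x1_laguerre_phi2_not_L2_at_infinity (k : ℝ) (hk : 0 < k)
    (φ₂ : ℝ → ℝ)
    (hφ₂ : ∀ x : ℝ, φ₂ x = (x + k + 1) *
      ∫ t in (1 : ℝ)..x, (t + k) ^ 2 * Real.exp t / ((t + k + 1) ^ 2 * t ^ (k + 1))) :
    ∫⁻ x in Set.Ici (1 : ℝ),
      ENNReal.ofReal (φ₂ x ^ 2 * (x ^ k * Real.exp (-x) / (x + k) ^ 2)) = ⊤ := by
  set C : ℝ := ((1 + k) / (2 + k)) ^ 4 * Real.exp (-2) with hC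
  have hC0 : 0 < C := by rw [hC]; positivity
  have htend : Filter.Tendsto (fun x : ℝ => C * (Real.exp x / x ^ (k + 2)))
      Filter.atTop Filter.atTop :=
    (tendsto_exp_div_rpow_atTop (k + 2)).const_mul_atTop hC0
  obtain ⟨M, hM⟩ := Filter.eventually_atTop.1
    ((htend.eventually_ge_atTop 1).and (Filter.eventually_ge_atTop (2:ℝ)))
  have hM2 : (2:ℝ) ≤ max M 2 := le_max_right _ _
  have hbig : ∀ x : ℝ, max M 2 ≤ x →
      (1 : ENNReal) ≤ ENNReal.ofReal (φ₂ x ^ 2 * (x ^ k * Real.exp (-x) / (x + k) ^ 2)) := by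
    intro x hx
    obtain ⟨h1, h2⟩ := hM x (le_trans (le_max_left _ _) hx)
    rw [ENNReal.one_le_ofReal, hφ₂ x]
    calc (1:ℝ) ≤ C * (Real.exp x / x ^ (k + 2)) := h1
      _ ≤ _ := aux_lb k x hk (le_trans hM2 hx)
  have hsub : Set.Ici (max M 2) ⊆ Set.Ici (1:ℝ) := fun x hx => le_trans (by linarith : (1:ℝ) ≤ max M 2) hx
  refine top_le_iff.1 ?_
  calc (⊤ : ENNReal) = 1 * volume (Set.Ici (max M 2)) := by
        rw [Real.volume_Ici]; simp
    _ = ∫⁻ _ in Set.Ici (max M 2), (1:ENNReal) := (setLIntegral_const _ _).symm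
    _ ≤ ∫⁻ x in Set.Ici (max M 2),
          ENNReal.ofReal (φ₂ x ^ 2 * (x ^ k * Real.exp (-x) / (x + k) ^ 2)) :=
        setLIntegral_mono' measurableSet_Ici (fun x hx => hbig x hx)
    _ ≤ _ := lintegral_mono_set hsub
end

section
/- Let 0 < k < 1 and φ₂(x) = (x+k+1) · ∫₁^x (t+k)² e^t / ((t+k+1)² t^{k+1}) dt. Then φ₂ belongs to L²((0,1]; w_k); that is, ∫₀^1 φ₂(x)² · x^k e^{-x}/(x+k)² dx < ∞. (Consequently both solutions φ₁, φ₂ are square integrable against w_k near 0, i.e. the endpoint 0 is in the limit-circle case.) -/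
open Real Set MeasureTheory intervalIntegral

/-- For `0 < k < 1`, the second solution
`φ₂(x) = (x+k+1) · ∫₁^x (t+k)² e^t / ((t+k+1)² t^(k+1)) dt` belongs to
`L²((0,1]; w_k)` with `w_k(x) = x^k e^(-x)/(x+k)^2`; that is,
`∫₀^1 φ₂(x)² · x^k e^(-x)/(x+k)² dx < ∞` (the limit-circle case at `0`). -/
theorem x1_laguerre_phi2_L2_at_zero (k : ℝ) (hk : 0 < k) (hk1 : k < 1)
    (φ₂ : ℝ → ℝ)
    (hφ₂ : ∀ x : ℝ, φ₂ x = (x + k + 1) *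
      ∫ t in (1 : ℝ)..x, (t + k) ^ 2 * Real.exp t / ((t + k + 1) ^ 2 * t ^ (k + 1))) :
    IntegrableOn
      (fun x : ℝ => φ₂ x ^ 2 * (x ^ k * Real.exp (-x) / (x + k) ^ 2))
      (Set.Ioc (0 : ℝ) 1) := by
  set g : ℝ → ℝ := fun t => (t + k) ^ 2 * Real.exp t / ((t + k + 1) ^ 2 * t ^ (k + 1)) with hgdef
  have hgcont : ContinuousOn g (Ioi (0:ℝ)) := by
    apply ContinuousOn.div
    · fun_prop
    · exact (((continuousOn_id.add continuousOn_const).add continuousOn_const).pow 2).mul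
        (continuousOn_id.rpow_const (fun x hx => Or.inl (ne_of_gt hx)))
    · intro t ht
      have ht' : (0:ℝ) < t := ht
      positivity
  have hgint : ∀ a b : ℝ, 0 < a → 0 < b → IntervalIntegrable g volume a b := by
    intro a b ha hb
    apply (hgcont.mono ?_).intervalIntegrable
    intro t ht
    rcases le_total a b with h | h
    · rw [uIcc_of_le h] at ht; exact lt_of_lt_of_le ha ht.1
    · rw [uIcc_of_ge h] at ht; exact lt_of_lt_of_le hb ht.1
  set F : ℝ → ℝ := fun x => ∫ t in (1:ℝ)..x, g t with hFdef
  have hFcont : ContinuousOn F (Ioc (0:ℝ) 1) := by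
    intro x hx
    have hx0 : 0 < x := hx.1
    have h2 : (0:ℝ) < x/2 := by linarith
    have hint : IntervalIntegrable g volume (min 1 (x/2)) (max 1 1) := by
      rw [max_self]
      exact hgint _ _ (lt_min one_pos h2) one_pos
    have hcw := continuousWithinAt_primitive (μ := volume) (f := g) (a := 1) (b₀ := x)
      (b₁ := x/2) (b₂ := 1) (measure_singleton x) hint
    apply hcw.mono_of_mem_nhdsWithin
    rw [mem_nhdsWithin]
    exact ⟨Ioi (x/2), isOpen_Ioi, by simp; linarith, fun y hy => ⟨hy.1.le, hy.2.2⟩⟩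
  have key : ∀ x ∈ Ioc (0:ℝ) 1, |F x| ≤ (Real.exp 1 / k) * x ^ (-k) := by
    intro x hx
    have hx0 : 0 < x := hx.1
    have hx1 : x ≤ 1 := hx.2
    have hsymm : F x = -∫ t in x..(1:ℝ), g t := intervalIntegral.integral_symm x 1
    rw [hsymm, abs_neg]
    have hgi : IntervalIntegrable g volume x 1 := hgint x 1 hx0 one_pos
    have hbi : IntervalIntegrable (fun t : ℝ => Real.exp 1 * t ^ (-(k+1))) volume x 1 := by
      apply ContinuousOn.intervalIntegrable
      apply continuousOn_const.mul (continuousOn_id.rpow_const ?_)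
      intro t ht
      rw [uIcc_of_le hx1] at ht
      exact Or.inl (ne_of_gt (lt_of_lt_of_le hx0 ht.1))
    have hptwise : ∀ t ∈ Icc x 1, g t ≤ Real.exp 1 * t ^ (-(k+1)) := by
      intro t ht
      have ht0 : 0 < t := lt_of_lt_of_le hx0 ht.1
      have htp : 0 < t ^ (k+1) := Real.rpow_pos_of_pos ht0 _
      rw [hgdef]
      simp only
      rw [div_le_iff₀ (by positivity)]
      have hcancel : t ^ (-(k+1)) * t ^ (k+1) = 1 := by
        rw [← Real.rpow_add ht0, show -(k+1)+(k+1) = 0 by ring, Real.rpow_zero]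
      have h1 : (t+k)^2 ≤ (t+k+1)^2 := by nlinarith [ht0.le, hk.le]
      have h2 : Real.exp t ≤ Real.exp 1 := Real.exp_le_exp.2 ht.2
      calc (t + k) ^ 2 * Real.exp t ≤ (t+k+1)^2 * Real.exp 1 := by
            apply mul_le_mul h1 h2 (Real.exp_pos t).le (by positivity)
        _ = Real.exp 1 * t ^ (-(k+1)) * ((t + k + 1) ^ 2 * t ^ (k + 1)) := by
            rw [show Real.exp 1 * t ^ (-(k+1)) * ((t + k + 1) ^ 2 * t ^ (k + 1))
              = (t ^ (-(k+1)) * t ^ (k+1)) * ((t+k+1)^2 * Real.exp 1) by ring, hcancel, one_mul]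
    have hnonneg : 0 ≤ ∫ t in x..(1:ℝ), g t := by
      apply intervalIntegral.integral_nonneg hx1
      intro t ht
      have ht0 : 0 < t := lt_of_lt_of_le hx0 ht.1
      rw [hgdef]
      positivity
    rw [abs_of_nonneg hnonneg]
    have hmono : ∫ t in x..(1:ℝ), g t ≤ ∫ t in x..(1:ℝ), Real.exp 1 * t ^ (-(k+1)) :=
      intervalIntegral.integral_mono_on hx1 hgi hbi hptwise
    have hcomp : ∫ t in x..(1:ℝ), Real.exp 1 * t ^ (-(k+1))
        = Real.exp 1 * ((1 ^ (-(k+1)+1) - x ^ (-(k+1)+1)) / (-(k+1)+1)) := by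
      rw [intervalIntegral.integral_const_mul]
      rw [integral_rpow (Or.inr ⟨fun h => hk.ne' (by linarith), by
        rw [uIcc_of_le hx1]; exact fun h => absurd h.1 (not_le.2 hx0)⟩)]
    rw [hcomp] at hmono
    apply le_trans hmono
    have hxk : (1:ℝ) ≤ x ^ (-k) :=
      Real.one_le_rpow_of_pos_of_le_one_of_nonpos hx0 hx1 (by linarith)
    have hE : (0:ℝ) < Real.exp 1 := Real.exp_pos 1
    have hsimp : -(k+1)+1 = -k := by ring
    rw [hsimp, Real.one_rpow]
    rw [show (1 - x ^ (-k)) = -(x ^ (-k) - 1) by ring, neg_div_neg_eq,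
      show Real.exp 1 * ((x ^ (-k) - 1) / k) = Real.exp 1 * (x ^ (-k) - 1) / k from
        (mul_div_assoc _ _ _).symm,
      div_mul_eq_mul_div]
    gcongr
    linarith
  -- continuity of the integrand
  have hcont : ContinuousOn
      (fun x : ℝ => φ₂ x ^ 2 * (x ^ k * Real.exp (-x) / (x + k) ^ 2)) (Ioc (0:ℝ) 1) := by
    have hφc : ContinuousOn φ₂ (Ioc (0:ℝ) 1) := by
      have hfe : φ₂ = fun x => (x + k + 1) * F x := funext hφ₂
      rw [hfe]
      exact ((continuousOn_id.add continuousOn_const).add continuousOn_const).mul hFcont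
    apply (hφc.pow 2).mul
    apply ContinuousOn.div
    · exact (continuousOn_id.rpow_const (fun x hx => Or.inl (ne_of_gt hx.1))).mul
        (Real.continuous_exp.comp continuous_neg).continuousOn
    · fun_prop
    · intro x hx
      have := hx.1
      positivity
  set C := 9 * (Real.exp 1 / k)^2 / k^2 with hC
  have hdom : IntegrableOn (fun x : ℝ => C * x ^ (-k)) (Ioc (0:ℝ) 1) := by
    have h := (intervalIntegral.intervalIntegrable_rpow' (a := (0:ℝ)) (b := 1)
      (by linarith : (-1:ℝ) < -k)).const_mul C
    rwa [intervalIntegrable_iff_integrableOn_Ioc_of_le (by norm_num)] at h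
  apply Integrable.mono' hdom (hcont.aestronglyMeasurable measurableSet_Ioc)
  filter_upwards [ae_restrict_mem measurableSet_Ioc] with x hx
  have hx0 : 0 < x := hx.1
  have hx1 : x ≤ 1 := hx.2
  have hA : 0 < x ^ (-k) := Real.rpow_pos_of_pos hx0 _
  have hE : (0:ℝ) < Real.exp 1 := Real.exp_pos 1
  have hnn : 0 ≤ φ₂ x ^ 2 * (x ^ k * Real.exp (-x) / (x + k) ^ 2) := by positivity
  rw [Real.norm_eq_abs, abs_of_nonneg hnn]
  have hφbound : |φ₂ x| ≤ 3 * (Real.exp 1 / k * x ^ (-k)) := by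
    rw [hφ₂ x, abs_mul]
    have h3 : |x + k + 1| ≤ 3 := by
      rw [abs_of_nonneg (by linarith)]; linarith
    have h2 := key x hx
    exact mul_le_mul h3 h2 (abs_nonneg _) (by norm_num)
  have hsq : φ₂ x ^ 2 ≤ 9 * (Real.exp 1 / k) ^ 2 * (x ^ (-k)) ^ 2 := by
    have h := pow_le_pow_left₀ (abs_nonneg (φ₂ x)) hφbound 2
    rw [sq_abs] at h
    calc φ₂ x ^ 2 ≤ (3 * (Real.exp 1 / k * x ^ (-k))) ^ 2 := h
      _ = 9 * (Real.exp 1 / k) ^ 2 * (x ^ (-k)) ^ 2 := by ring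
  have hAB : (x ^ (-k)) ^ 2 * x ^ k = x ^ (-k) := by
    rw [sq, mul_assoc, ← Real.rpow_add hx0, ← Real.rpow_add hx0]
    norm_num
  have hexp : Real.exp (-x) ≤ 1 := Real.exp_le_one_iff.2 (by linarith)
  have hden : k ^ 2 ≤ (x + k) ^ 2 := by nlinarith
  calc φ₂ x ^ 2 * (x ^ k * Real.exp (-x) / (x + k) ^ 2)
      ≤ (9 * (Real.exp 1 / k) ^ 2 * (x ^ (-k)) ^ 2) * (x ^ k * 1 / k ^ 2) := by
        apply mul_le_mul hsq ?_ (by positivity) (by positivity)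
        apply div_le_div₀ (by positivity) ?_ (by positivity) hden
        have hxp : (0:ℝ) ≤ x ^ k := (Real.rpow_pos_of_pos hx0 k).le
        nlinarith [Real.exp_pos (-x)]
    _ = C * x ^ (-k) := by
        rw [hC, mul_one,
          show 9 * (Real.exp 1 / k) ^ 2 * (x ^ (-k)) ^ 2 * (x ^ k / k ^ 2)
            = 9 * (Real.exp 1 / k) ^ 2 / k ^ 2 * ((x ^ (-k)) ^ 2 * x ^ k) by ring, hAB]
end

section
/- Let k ≥ 1 and φ₂(x) = (x+k+1) · ∫₁^x (t+k)² e^t / ((t+k+1)² t^{k+1}) dt. Then φ₂ does not belong to L²((0,1]; w_k); that is, ∫₀^1 φ₂(x)² · x^k e^{-x}/(x+k)² dx = ∞. (Consequently not every solution is square integrable against w_k near 0, i.e. the endpoint 0 is in the limit-point case.) -/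
open Real Set MeasureTheory intervalIntegral

-- divergence lemma
lemma aux_div (c : ℝ) (hc : 0 < c) :
    ∫⁻ x in Set.Ioc (0:ℝ) (1/2), ENNReal.ofReal (c * x⁻¹) = ⊤ := by
  by_contra h
  have hm : AEStronglyMeasurable (fun x : ℝ => c * x⁻¹)
      (volume.restrict (Set.Ioc (0:ℝ) (1/2))) :=
    (measurable_const.mul measurable_inv).aestronglyMeasurable
  have hnn : 0 ≤ᵐ[volume.restrict (Set.Ioc (0:ℝ) (1/2))] fun x : ℝ => c * x⁻¹ := by
    filter_upwards [ae_restrict_mem measurableSet_Ioc] with x hx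
    have := hx.1; positivity
  have hint : Integrable (fun x : ℝ => c * x⁻¹)
      (volume.restrict (Set.Ioc (0:ℝ) (1/2))) :=
    (lintegral_ofReal_ne_top_iff_integrable hm hnn).mp h
  have hint2 : IntegrableOn (fun x : ℝ => x⁻¹) (Set.Ioc (0:ℝ) (1/2)) := by
    have := hint.const_mul c⁻¹
    simpa [IntegrableOn, ← mul_assoc, inv_mul_cancel₀ hc.ne'] using this
  have hint3 : IntegrableOn (fun x : ℝ => x ^ (-1 : ℝ)) (Set.Ioo (0:ℝ) (1/2)) := by
    refine ((hint2.mono Set.Ioo_subset_Ioc_self le_rfl).congr_fun ?_ measurableSet_Ioo)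
    intro x hx
    simp [Real.rpow_neg_one]
  rw [integrableOn_Ioo_rpow_iff (by norm_num)] at hint3
  exact lt_irrefl _ hint3

lemma aux_bound (k x : ℝ) (hk : 1 ≤ k) (hx0 : 0 < x) (hx2 : x ≤ 1/2) :
    Real.exp (-1) / (64 * k ^ 2) * x⁻¹ ≤
      ((x + k + 1) *
          ∫ t in (1:ℝ)..x, (t + k) ^ 2 * Real.exp t / ((t + k + 1) ^ 2 * t ^ (k + 1))) ^ 2
        * (x ^ k * Real.exp (-x) / (x + k) ^ 2) := by
  have hk0 : (0:ℝ) < k := by linarith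
  have hx1 : x ≤ 1 := by linarith
  set f : ℝ → ℝ := fun t => (t + k) ^ 2 * Real.exp t / ((t + k + 1) ^ 2 * t ^ (k + 1)) with hf
  set u : ℝ := x ^ k with hu
  have hupos : 0 < u := Real.rpow_pos_of_pos hx0 k
  have hux : u ≤ x := by
    calc u = x ^ k := rfl
    _ ≤ x ^ (1:ℝ) := Real.rpow_le_rpow_of_exponent_ge hx0 hx1 hk
    _ = x := Real.rpow_one x
  have hu2 : 2 ≤ u⁻¹ := by
    rw [show (2:ℝ) = (1/2:ℝ)⁻¹ by norm_num]
    exact inv_anti₀ hupos (by linarith)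
  have hxu : x⁻¹ ≤ u⁻¹ := inv_anti₀ hupos hux
  -- the inner integral from x to 1
  set I : ℝ := ∫ t in x..(1:ℝ), f t with hI
  have h0not : (0:ℝ) ∉ Set.uIcc x 1 := by
    rw [Set.uIcc_of_le hx1]
    simp only [Set.mem_Icc, not_and]
    intro h; linarith
  have hfint : IntervalIntegrable f volume x 1 := by
    apply ContinuousOn.intervalIntegrable
    rw [Set.uIcc_of_le hx1]
    have h1 : ContinuousOn (fun t : ℝ => t ^ (k+1)) (Set.Icc x 1) :=
      continuousOn_id.rpow_const (fun t ht => Or.inl (by have := ht.1; intro h0; simp [h0] at *; linarith))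
    apply ContinuousOn.div
    · exact ((continuousOn_id.add continuousOn_const).pow 2).mul Real.continuous_exp.continuousOn
    · exact (((continuousOn_id.add continuousOn_const).add continuousOn_const).pow 2).mul h1
    · intro t ht
      have ht0 : 0 < t := lt_of_lt_of_le hx0 ht.1
      have : 0 < t ^ (k+1) := Real.rpow_pos_of_pos ht0 _
      positivity
  have hgint : IntervalIntegrable (fun t : ℝ => (1/4) * t ^ (-(k+1))) volume x 1 :=
    (intervalIntegrable_rpow (Or.inr h0not)).const_mul _
  have hptwise : ∀ t ∈ Set.Icc x 1, (1/4) * t ^ (-(k+1)) ≤ f t := by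
    intro t ht
    have ht0 : 0 < t := lt_of_lt_of_le hx0 ht.1
    have htk : 0 < t ^ (k+1) := Real.rpow_pos_of_pos ht0 _
    have he : 1 ≤ Real.exp t := Real.one_le_exp ht0.le
    rw [Real.rpow_neg ht0.le, hf]
    simp only
    rw [le_div_iff₀ (by positivity)]
    have heq : 1/4 * (t ^ (k+1))⁻¹ * ((t + k + 1) ^ 2 * t ^ (k+1)) = (t + k + 1)^2 / 4 := by
      field_simp
    rw [heq]
    nlinarith [sq_nonneg (t + k), Real.exp_pos t]
  have hmono : ∫ t in x..(1:ℝ), (1/4) * t ^ (-(k+1)) ≤ I :=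
    intervalIntegral.integral_mono_on hx1 hgint hfint hptwise
  have hval : ∫ t in x..(1:ℝ), (1/4) * t ^ (-(k+1)) = (1/4) * ((1 - u⁻¹) / (-k)) := by
    rw [intervalIntegral.integral_const_mul, integral_rpow (Or.inr ⟨by intro h; simp only [neg_add_rev] at h; linarith, h0not⟩)]
    have : -(k+1) + 1 = -k := by ring
    rw [this, Real.one_rpow, Real.rpow_neg hx0.le, ← hu]
  have hIl : u⁻¹ / (8 * k) ≤ I := by
    have h1 : u⁻¹ / (8 * k) ≤ (1/4) * ((1 - u⁻¹) / (-k)) := by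
      rw [div_le_iff₀ (by positivity)]
      have : (1/4) * ((1 - u⁻¹)/(-k)) = (u⁻¹ - 1)/(4*k) := by ring
      rw [this, div_mul_eq_mul_div, le_div_iff₀ (by positivity)]
      nlinarith
    linarith [hval ▸ hmono]
  have hIpos : 0 ≤ I := le_trans (by positivity) hIl
  -- rewrite φ₂ squared
  have hsym : (∫ t in (1:ℝ)..x, f t) = -I := by
    rw [hI, intervalIntegral.integral_symm]
  rw [hsym]
  have hsq : ((x + k + 1) * -I)^2 = (x+k+1)^2 * I^2 := by ring
  rw [hsq]
  have hI2 : (u⁻¹ / (8*k))^2 ≤ I^2 := by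
    apply pow_le_pow_left₀ (by positivity) hIl
  have hexp : Real.exp (-1) ≤ Real.exp (-x) := Real.exp_le_exp.mpr (by linarith)
  have hAB : (x+k)^2 ≤ (x+k+1)^2 := by nlinarith
  have hBpos : (0:ℝ) < (x+k)^2 := by positivity
  calc Real.exp (-1) / (64 * k^2) * x⁻¹
      ≤ Real.exp (-1) / (64 * k^2) * u⁻¹ := by gcongr
    _ = (u⁻¹/(8*k))^2 * (u * Real.exp (-1)) := by field_simp; ring
    _ ≤ I^2 * (u * Real.exp (-x)) := by
        apply mul_le_mul hI2 (by gcongr) (by positivity) (by positivity)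
    _ ≤ ((x+k+1)^2/(x+k)^2) * (I^2 * (u * Real.exp (-x))) := by
        apply le_mul_of_one_le_left (by positivity)
        rw [le_div_iff₀ hBpos]; linarith
    _ = (x+k+1)^2 * I^2 * (u * Real.exp (-x) / (x+k)^2) := by
        field_simp

/-- For `k ≥ 1`, the second solution
`φ₂(x) = (x+k+1) · ∫₁^x (t+k)² e^t / ((t+k+1)² t^(k+1)) dt` is not in
`L²((0,1]; w_k)` with `w_k(x) = x^k e^(-x)/(x+k)^2`; that is,
`∫₀^1 φ₂(x)² · x^k e^(-x)/(x+k)² dx = ∞` (the limit-point case at `0`). -/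
theorem x1_laguerre_phi2_not_L2_at_zero (k : ℝ) (hk : 1 ≤ k)
    (φ₂ : ℝ → ℝ)
    (hφ₂ : ∀ x : ℝ, φ₂ x = (x + k + 1) *
      ∫ t in (1 : ℝ)..x, (t + k) ^ 2 * Real.exp t / ((t + k + 1) ^ 2 * t ^ (k + 1))) :
    ∫⁻ x in Set.Ioc (0 : ℝ) 1,
      ENNReal.ofReal (φ₂ x ^ 2 * (x ^ k * Real.exp (-x) / (x + k) ^ 2)) = ⊤ := by
  rw [eq_top_iff]
  have hc : 0 < Real.exp (-1) / (64 * k ^ 2) := by positivity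
  calc (⊤ : ENNReal)
      = ∫⁻ x in Set.Ioc (0:ℝ) (1/2),
          ENNReal.ofReal (Real.exp (-1) / (64 * k ^ 2) * x⁻¹) := (aux_div _ hc).symm
    _ ≤ ∫⁻ x in Set.Ioc (0:ℝ) (1/2),
          ENNReal.ofReal (φ₂ x ^ 2 * (x ^ k * Real.exp (-x) / (x + k) ^ 2)) := by
        apply lintegral_mono_ae
        filter_upwards [ae_restrict_mem measurableSet_Ioc] with x hx
        apply ENNReal.ofReal_le_ofReal
        rw [hφ₂ x]
        exact aux_bound k x hk hx.1 hx.2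
    _ ≤ ∫⁻ x in Set.Ioc (0:ℝ) 1,
          ENNReal.ofReal (φ₂ x ^ 2 * (x ^ k * Real.exp (-x) / (x + k) ^ 2)) :=
        lintegral_mono_set (Set.Ioc_subset_Ioc_right (by norm_num))
end

section
/- Let k > 0 and φ₂(x) = (x+k+1) · ∫₁^x (t+k)² e^t / ((t+k+1)² t^{k+1}) dt. Then as x → 0⁺ one has the asymptotic behaviour x^k · φ₂(x) → -k/(k+1); in particular φ₂(x) ~ -(k/(k+1)) x^{-k} near the endpoint 0. -/
open Real Set MeasureTheory intervalIntegral Filter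
open Topology

private noncomputable def fkAux (k : ℝ) (t : ℝ) : ℝ :=
  (t + k) ^ 2 * Real.exp t / ((t + k + 1) ^ 2 * t ^ (k + 1))

private lemma fkAux_low (k t : ℝ) (hk : 0 < k) (ht : 0 < t) :
    k^2/(k+1)^2 * t^(-(k+1)) ≤ fkAux k t := by
  have hE : 1 ≤ Real.exp t := Real.one_le_exp ht.le
  have h1 : (0:ℝ) < (k+1)^2 := by positivity
  have h2 : (0:ℝ) < (t+k+1)^2 := by positivity
  unfold fkAux
  rw [← div_div, div_eq_mul_inv ((t+k)^2 * Real.exp t / (t+k+1)^2), Real.rpow_neg ht.le]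
  refine mul_le_mul_of_nonneg_right ?_ (by positivity)
  rw [div_le_div_iff₀ h1 h2]
  nlinarith [mul_le_mul_of_nonneg_left hE (by positivity : (0:ℝ) ≤ (t+k)^2*(k+1)^2),
    mul_pos hk ht, sq_nonneg ((k+1)*(t+k) - k*(t+k+1))]

private lemma fkAux_up (k t : ℝ) (hk : 0 < k) (ht : 0 < t) (ht1 : t ≤ 1) :
    fkAux k t - k^2/(k+1)^2 * t^(-(k+1)) ≤ Real.exp 1 * t * t^(-(k+1)) := by
  have h1 : (0:ℝ) < (k+1)^2 := by positivity
  have h2 : (0:ℝ) < (t+k+1)^2 := by positivity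
  have he : Real.exp t ≤ Real.exp 1 := Real.exp_le_exp.2 ht1
  have h2e : (2:ℝ) ≤ Real.exp 1 := by
    have := Real.add_one_le_exp 1; linarith
  have hE1 : Real.exp t ≤ 1 + t * Real.exp 1 := by
    have h := Real.add_one_le_exp (-t)
    have h2 : Real.exp t * (-t + 1) ≤ 1 := by
      have h3 := mul_le_mul_of_nonneg_left h (Real.exp_pos t).le
      rw [← Real.exp_add] at h3
      simpa using h3
    nlinarith [mul_le_mul_of_nonneg_left he ht.le]
  have inner : t*(2*k+1) + 2*k*(k+1) ≤ Real.exp 1*(k+1)^2*(2*t+2*k+1) := by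
    have h2' : 2*((k+1)^2*(2*t+2*k+1)) ≤ Real.exp 1*((k+1)^2*(2*t+2*k+1)) :=
      mul_le_mul_of_nonneg_right h2e (by positivity)
    nlinarith [h2', mul_pos hk hk, mul_pos ht hk, mul_pos (mul_pos hk hk) hk,
      mul_nonneg ht.le (sq_nonneg k)]
  have key : (t+k)^2*Real.exp t*(k+1)^2
      ≤ (k^2 + Real.exp 1*t*(k+1)^2)*(t+k+1)^2 := by
    have step2 : (k+1)^2*(t+k)^2*(1+t*Real.exp 1)
        ≤ (k^2 + Real.exp 1*t*(k+1)^2)*(t+k+1)^2 := by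
      nlinarith [mul_le_mul_of_nonneg_left inner ht.le]
    nlinarith [mul_le_mul_of_nonneg_left hE1 (by positivity : (0:ℝ) ≤ (k+1)^2*(t+k)^2)]
  have hAB : (t+k)^2 * Real.exp t / (t+k+1)^2 ≤ k^2/(k+1)^2 + Real.exp 1 * t := by
    have hc : k^2/(k+1)^2 + Real.exp 1 * t
        = (k^2 + Real.exp 1*t*(k+1)^2)/(k+1)^2 := by field_simp
    rw [hc, div_le_div_iff₀ h2 h1]
    linarith [key]
  unfold fkAux
  rw [← div_div, div_eq_mul_inv ((t+k)^2 * Real.exp t / (t+k+1)^2), Real.rpow_neg ht.le,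
    ← sub_mul]
  refine mul_le_mul_of_nonneg_right ?_ (by positivity)
  linarith [hAB]

/-- For `k > 0`, the second solution
`φ₂(x) = (x+k+1) · ∫₁^x (t+k)² e^t / ((t+k+1)² t^(k+1)) dt` satisfies
`x^k · φ₂(x) → -k/(k+1)` as `x → 0⁺`; that is, `φ₂(x) ~ -(k/(k+1)) x^(-k)`
near the endpoint `0`. -/
theorem x1_laguerre_phi2_asymptotics_at_zero (k : ℝ) (hk : 0 < k)
    (φ₂ : ℝ → ℝ)
    (hφ₂ : ∀ x : ℝ, φ₂ x = (x + k + 1) *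
      ∫ t in (1 : ℝ)..x, (t + k) ^ 2 * Real.exp t / ((t + k + 1) ^ 2 * t ^ (k + 1))) :
    Filter.Tendsto (fun x : ℝ => x ^ k * φ₂ x)
      (nhdsWithin 0 (Set.Ioi (0 : ℝ))) (nhds (-(k / (k + 1)))) := by
  have hφ₂' : ∀ x : ℝ, φ₂ x = (x + k + 1) * ∫ t in (1:ℝ)..x, fkAux k t := by
    intro x; rw [hφ₂ x]; rfl
  have hk1 : (0:ℝ) < k + 1 := by linarith
  set α : ℝ := min 1 (k/2) with hα
  have hα0 : 0 < α := lt_min one_pos (by positivity)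
  have hα1 : α ≤ 1 := min_le_left _ _
  have hαk : α < k := lt_of_le_of_lt (min_le_right _ _) (by linarith)
  -- integrability
  have hIf : ∀ x : ℝ, 0 < x → IntervalIntegrable (fkAux k) volume x 1 := by
    intro x hx
    apply ContinuousOn.intervalIntegrable
    intro t ht
    have ht0 : 0 < t := by
      rcases le_total x 1 with h | h
      · rw [uIcc_of_le h] at ht; exact lt_of_lt_of_le hx ht.1
      · rw [uIcc_of_ge h] at ht; exact lt_of_lt_of_le one_pos ht.1
    refine ContinuousAt.continuousWithinAt ?_
    unfold fkAux
    apply ContinuousAt.div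
    · fun_prop
    · exact ((continuousAt_id.add continuousAt_const).add continuousAt_const).pow 2 |>.mul
        (Real.continuousAt_rpow_const t (k+1) (Or.inl ht0.ne'))
    · exact mul_ne_zero (pow_ne_zero 2 (by nlinarith)) (Real.rpow_pos_of_pos ht0 _).ne'
  have hIr : ∀ r : ℝ, ∀ x : ℝ, 0 < x → IntervalIntegrable (fun t : ℝ => t ^ r) volume x 1 := by
    intro r x hx
    apply intervalIntegral.intervalIntegrable_rpow (Or.inr ?_)
    rw [Set.mem_uIcc]
    push_neg
    exact ⟨fun h => absurd h (not_le.2 hx), fun h => absurd h (by norm_num)⟩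
  have hmem : Ioo (0:ℝ) 1 ∈ 𝓝[>] (0:ℝ) := Ioo_mem_nhdsGT one_pos
  -- eventual equality
  have heq : ∀ᶠ x in 𝓝[>] (0:ℝ), x ^ k * φ₂ x
      = (x + k + 1) * (k^2/(k+1)^2 / k * (x ^ k - 1)
          - x ^ k * ∫ t in x..1, (fkAux k t - k^2/(k+1)^2 * t ^ (-(k+1)))) := by
    filter_upwards [hmem] with x hx
    obtain ⟨hx0, hx1⟩ := hx
    have hxk : x ^ k * x ^ (-k) = 1 := by
      rw [← Real.rpow_add hx0]; simp
    have h0m : (0:ℝ) ∉ uIcc x 1 := by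
      rw [Set.uIcc_of_le hx1.le]
      exact fun h => absurd h.1 (not_le.2 hx0)
    have hne1 : -(k+1) ≠ (-1 : ℝ) := by intro h; apply hk.ne'; linarith
    have hint1 : (∫ t in x..1, t ^ (-(k+1))) = ((1:ℝ) - x ^ (-k)) / (-k) := by
      rw [integral_rpow (Or.inr ⟨hne1, h0m⟩), show -(k+1)+1 = -k by ring, Real.one_rpow]
    have hsub : (∫ t in x..1, (fkAux k t - k^2/(k+1)^2 * t ^ (-(k+1))))
        = (∫ t in x..1, fkAux k t) - k^2/(k+1)^2 * (((1:ℝ) - x ^ (-k)) / (-k)) := by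
      rw [intervalIntegral.integral_sub (hIf x hx0) ((hIr _ x hx0).const_mul _),
        intervalIntegral.integral_const_mul, hint1]
    have hswap : (∫ t in (1:ℝ)..x, fkAux k t) = -∫ t in x..1, fkAux k t :=
      intervalIntegral.integral_symm x 1
    rw [hφ₂' x, hswap]
    have hsum : (∫ t in x..1, fkAux k t)
        = (∫ t in x..1, (fkAux k t - k^2/(k+1)^2 * t ^ (-(k+1))))
          + k^2/(k+1)^2 * (((1:ℝ) - x ^ (-k)) / (-k)) := by
      rw [hsub]; ring
    rw [hsum]
    linear_combination (-(x + k + 1) * (k^2/(k+1)^2 / k)) * hxk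
  -- remainder term tends to 0
  have hGt : Tendsto
      (fun x : ℝ => x ^ k * ∫ t in x..1, (fkAux k t - k^2/(k+1)^2 * t ^ (-(k+1))))
      (𝓝[>] (0:ℝ)) (𝓝 0) := by
    have hkα : (0:ℝ) < k - α := by linarith
    refine squeeze_zero' (g := fun x : ℝ => (Real.exp 1 / (k - α)) * x ^ α) ?_ ?_ ?_
    · filter_upwards [hmem] with x hx
      obtain ⟨hx0, hx1⟩ := hx
      have hGnn : 0 ≤ ∫ t in x..1, (fkAux k t - k^2/(k+1)^2 * t ^ (-(k+1))) := by
        apply intervalIntegral.integral_nonneg hx1.le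
        intro t ht
        have ht0 : 0 < t := lt_of_lt_of_le hx0 ht.1
        have := fkAux_low k t hk ht0
        linarith
      exact mul_nonneg (Real.rpow_nonneg hx0.le k) hGnn
    · filter_upwards [hmem] with x hx
      obtain ⟨hx0, hx1⟩ := hx
      have h0m : (0:ℝ) ∉ uIcc x 1 := by
        rw [Set.uIcc_of_le hx1.le]
        exact fun h => absurd h.1 (not_le.2 hx0)
      have hb : ∀ t ∈ Icc x 1, fkAux k t - k^2/(k+1)^2 * t ^ (-(k+1))
          ≤ Real.exp 1 * t ^ (α-(k+1)) := by
        intro t ht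
        have ht0 : 0 < t := lt_of_lt_of_le hx0 ht.1
        have h1 := fkAux_up k t hk ht0 ht.2
        have h2 : t * t ^ (-(k+1)) ≤ t ^ (α-(k+1)) := by
          have h3 : t ^ (1:ℝ) ≤ t ^ α := Real.rpow_le_rpow_of_exponent_ge ht0 ht.2 hα1
          calc t * t ^ (-(k+1)) = t ^ (1:ℝ) * t ^ (-(k+1)) := by rw [Real.rpow_one]
            _ ≤ t ^ α * t ^ (-(k+1)) :=
                mul_le_mul_of_nonneg_right h3 (Real.rpow_nonneg ht0.le _)
            _ = t ^ (α-(k+1)) := by rw [← Real.rpow_add ht0]; ring_nf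
        calc fkAux k t - k^2/(k+1)^2 * t ^ (-(k+1)) ≤ Real.exp 1 * t * t ^ (-(k+1)) := h1
          _ = Real.exp 1 * (t * t ^ (-(k+1))) := by ring
          _ ≤ Real.exp 1 * t ^ (α-(k+1)) :=
              mul_le_mul_of_nonneg_left h2 (Real.exp_pos 1).le
      have hne2 : α - (k+1) ≠ (-1:ℝ) := by
        intro h; exact hαk.ne (by linarith)
      have hint2 : (∫ t in x..1, Real.exp 1 * t ^ (α-(k+1)))
          = Real.exp 1 * ((1 - x ^ (α-k)) / (α-k)) := by
        rw [intervalIntegral.integral_const_mul,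
          integral_rpow (Or.inr ⟨hne2, h0m⟩),
          show α-(k+1)+1 = α-k by ring, Real.one_rpow]
      have hGle : (∫ t in x..1, (fkAux k t - k^2/(k+1)^2 * t ^ (-(k+1))))
          ≤ Real.exp 1 * ((1 - x ^ (α-k)) / (α-k)) := by
        rw [← hint2]
        exact intervalIntegral.integral_mono_on hx1.le
          ((hIf x hx0).sub ((hIr _ x hx0).const_mul _))
          ((hIr _ x hx0).const_mul _) hb
      have hne3 : α - k ≠ 0 := sub_ne_zero.2 hαk.ne
      have hne4 : k - α ≠ 0 := hkα.ne'
      have hxα : x ^ k * x ^ (α-k) = x ^ α := by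
        rw [← Real.rpow_add hx0]; ring_nf
      calc x ^ k * ∫ t in x..1, (fkAux k t - k^2/(k+1)^2 * t ^ (-(k+1)))
          ≤ x ^ k * (Real.exp 1 * ((1 - x ^ (α-k)) / (α-k))) :=
            mul_le_mul_of_nonneg_left hGle (Real.rpow_nonneg hx0.le k)
        _ = (Real.exp 1 / (k - α)) * (x ^ k * x ^ (α-k))
              - (Real.exp 1 / (k - α)) * x ^ k := by
            field_simp
            ring
        _ = (Real.exp 1 / (k - α)) * x ^ α - (Real.exp 1 / (k - α)) * x ^ k := by
            rw [hxα]
        _ ≤ (Real.exp 1 / (k - α)) * x ^ α := by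
            have : 0 ≤ (Real.exp 1 / (k - α)) * x ^ k :=
              mul_nonneg (div_nonneg (Real.exp_pos 1).le hkα.le)
                (Real.rpow_nonneg hx0.le k)
            linarith
    · have hα' : Tendsto (fun x : ℝ => x ^ α) (𝓝[>] (0:ℝ)) (𝓝 0) := by
        have hcont := (Real.continuousAt_rpow_const 0 α (Or.inr hα0.le)).tendsto
        rw [Real.zero_rpow hα0.ne'] at hcont
        exact hcont.mono_left nhdsWithin_le_nhds
      simpa using hα'.const_mul (Real.exp 1 / (k - α))
  -- assemble
  have hxk' : Tendsto (fun x : ℝ => x ^ k) (𝓝[>] (0:ℝ)) (𝓝 0) := by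
    have hcont := (Real.continuousAt_rpow_const 0 k (Or.inr hk.le)).tendsto
    rw [Real.zero_rpow hk.ne'] at hcont
    exact hcont.mono_left nhdsWithin_le_nhds
  have hlin : Tendsto (fun x : ℝ => x + k + 1) (𝓝[>] (0:ℝ)) (𝓝 (k + 1)) := by
    have hcont : Continuous (fun x : ℝ => x + k + 1) := by continuity
    have h := hcont.tendsto (0:ℝ)
    simpa using h.mono_left nhdsWithin_le_nhds
  have hfinal := hlin.mul (((hxk'.sub_const 1).const_mul (k^2/(k+1)^2 / k)).sub hGt)
  have hval : (k + 1) * (k^2/(k+1)^2 / k * ((0:ℝ) - 1) - 0) = -(k / (k + 1)) := by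
    have h1 : k ≠ 0 := hk.ne'
    have h2 : k + 1 ≠ 0 := hk1.ne'
    field_simp
    ring
  rw [hval] at hfinal
  exact Filter.Tendsto.congr' (Filter.EventuallyEq.symm heq) hfinal
end

section
/- Let k > 0 and φ₂(x) = (x+k+1) · ∫₁^x (t+k)² e^t / ((t+k+1)² t^{k+1}) dt. Then as x → +∞ one has the asymptotic behaviour x^k e^{-x} · φ₂(x) → 1; in particular φ₂(x) ~ e^x x^{-k} as x → ∞. -/
open Real Set MeasureTheory intervalIntegral Filter

noncomputable def x1f (k t : ℝ) : ℝ := (t + k) ^ 2 * Real.exp t / ((t + k + 1) ^ 2 * t ^ (k + 1))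

noncomputable def x1h (k t : ℝ) : ℝ := Real.exp t / ((t + k + 1) * t ^ k)

noncomputable def x1r (k t : ℝ) : ℝ :=
  (2 * k * t + 2 * k ^ 2 + k) * Real.exp t / ((t + k + 1) ^ 2 * t ^ (k + 1))

lemma x1h_hasDerivAt (k : ℝ) (hk : 0 < k) {t : ℝ} (ht : 0 < t) :
    HasDerivAt (x1h k) (x1f k t - x1r k t) t := by
  have h1 : (0:ℝ) < t + k + 1 := by linarith
  have hA : (0:ℝ) < t ^ (k - 1) := Real.rpow_pos_of_pos ht _
  have hu : HasDerivAt (fun t : ℝ => t + k + 1) 1 t := by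
    simpa using ((hasDerivAt_id t).add_const k).add_const 1
  have hv : HasDerivAt (fun t : ℝ => (t + k + 1) * t ^ k)
      (1 * t ^ k + (t + k + 1) * (k * t ^ (k - 1))) t :=
    hu.mul (Real.hasDerivAt_rpow_const (Or.inl ht.ne'))
  have hvne : (t + k + 1) * t ^ k ≠ 0 :=
    mul_ne_zero h1.ne' (Real.rpow_pos_of_pos ht k).ne'
  have hD := (Real.hasDerivAt_exp t).div hv hvne
  have e0 : t ^ k = t ^ (k - 1) * t := by
    rw [← Real.rpow_add_one ht.ne']; congr 1; ring
  have e1 : t ^ (k + 1) = t ^ (k - 1) * t ^ 2 := by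
    rw [sq, ← mul_assoc, ← e0, ← Real.rpow_add_one ht.ne']
  have heq : (Real.exp t * ((t + k + 1) * t ^ k)
        - Real.exp t * (1 * t ^ k + (t + k + 1) * (k * t ^ (k - 1))))
        / ((t + k + 1) * t ^ k) ^ 2 = x1f k t - x1r k t := by
    unfold x1f x1r
    rw [e1, e0]
    have hne1 : t ^ (k - 1) ≠ 0 := hA.ne'
    field_simp
    ring
  exact heq ▸ hD

lemma x1f_contOn (k : ℝ) (hk : 0 < k) : ContinuousOn (x1f k) (Set.Ici (1:ℝ)) := by
  intro t ht
  have ht0 : (0:ℝ) < t := lt_of_lt_of_le one_pos ht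
  have h1 : ContinuousAt (fun t : ℝ => t ^ (k + 1)) t :=
    Real.continuousAt_rpow_const t (k + 1) (Or.inl ht0.ne')
  have hc : ContinuousAt (x1f k) t := by
    apply ContinuousAt.div (by fun_prop) (ContinuousAt.mul (by fun_prop) h1)
    exact mul_ne_zero (pow_ne_zero 2 (by nlinarith : (0:ℝ) < t + k + 1).ne')
      (Real.rpow_pos_of_pos ht0 _).ne'
  exact hc.continuousWithinAt

lemma x1r_contOn (k : ℝ) (hk : 0 < k) : ContinuousOn (x1r k) (Set.Ici (1:ℝ)) := by
  intro t ht
  have ht0 : (0:ℝ) < t := lt_of_lt_of_le one_pos ht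
  have h1 : ContinuousAt (fun t : ℝ => t ^ (k + 1)) t :=
    Real.continuousAt_rpow_const t (k + 1) (Or.inl ht0.ne')
  have hc : ContinuousAt (x1r k) t := by
    apply ContinuousAt.div (by fun_prop) (ContinuousAt.mul (by fun_prop) h1)
    exact mul_ne_zero (pow_ne_zero 2 (by nlinarith : (0:ℝ) < t + k + 1).ne')
      (Real.rpow_pos_of_pos ht0 _).ne'
  exact hc.continuousWithinAt

lemma x1r_nonneg (k : ℝ) (hk : 0 < k) {t : ℝ} (ht : 1 ≤ t) : 0 ≤ x1r k t := by
  have ht0 : (0:ℝ) < t := lt_of_lt_of_le one_pos ht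
  unfold x1r
  apply div_nonneg
  · exact mul_nonneg (by nlinarith) (Real.exp_pos t).le
  · exact mul_nonneg (sq_nonneg _) (Real.rpow_nonneg ht0.le _)

lemma x1r_le (k : ℝ) (hk : 0 < k) {t : ℝ} (ht : 1 ≤ t) :
    x1r k t ≤ 3 * k * Real.exp t / t ^ (k + 2) := by
  have ht0 : (0:ℝ) < t := lt_of_lt_of_le one_pos ht
  have h1 : (0:ℝ) < t + k + 1 := by linarith
  have hp1 : (0:ℝ) < t ^ (k + 1) := Real.rpow_pos_of_pos ht0 _
  have hp2 : (0:ℝ) < t ^ (k + 2) := Real.rpow_pos_of_pos ht0 _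
  unfold x1r
  rw [div_le_div_iff₀ (by positivity) hp2]
  have e1 : t ^ (k + 2) = t ^ (k + 1) * t := by
    rw [← Real.rpow_add_one ht0.ne']; congr 1; ring
  rw [e1]
  have key : (2 * k * t + 2 * k ^ 2 + k) * t ≤ 3 * k * (t + k + 1) ^ 2 := by nlinarith
  calc (2 * k * t + 2 * k ^ 2 + k) * Real.exp t * (t ^ (k + 1) * t)
      = ((2 * k * t + 2 * k ^ 2 + k) * t) * (Real.exp t * t ^ (k + 1)) := by ring
    _ ≤ (3 * k * (t + k + 1) ^ 2) * (Real.exp t * t ^ (k + 1)) :=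
        mul_le_mul_of_nonneg_right key (mul_nonneg (Real.exp_pos t).le hp1.le)
    _ = 3 * k * Real.exp t * ((t + k + 1) ^ 2 * t ^ (k + 1)) := by ring

lemma x1_ftc (k : ℝ) (hk : 0 < k) {x : ℝ} (hx : 1 ≤ x) :
    ∫ t in (1:ℝ)..x, x1f k t = x1h k x - x1h k 1 + ∫ t in (1:ℝ)..x, x1r k t := by
  have hsub : Set.uIcc (1:ℝ) x ⊆ Set.Ici (1:ℝ) := by
    rw [Set.uIcc_of_le hx]; exact Set.Icc_subset_Ici_self
  have hfint : IntervalIntegrable (x1f k) volume 1 x :=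
    ((x1f_contOn k hk).mono hsub).intervalIntegrable
  have hrint : IntervalIntegrable (x1r k) volume 1 x :=
    ((x1r_contOn k hk).mono hsub).intervalIntegrable
  have hd : ∀ t ∈ Set.uIcc (1:ℝ) x, HasDerivAt (x1h k) (x1f k t - x1r k t) t := by
    intro t htm
    exact x1h_hasDerivAt k hk (lt_of_lt_of_le one_pos (hsub htm))
  have hFTC := intervalIntegral.integral_eq_sub_of_hasDerivAt hd (hfint.sub hrint)
  rw [intervalIntegral.integral_sub hfint hrint] at hFTC
  linarith

lemma x1ah (k : ℝ) (hk : 0 < k) {x : ℝ} (hx : 0 < x) :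
    x ^ k * Real.exp (-x) * (x + k + 1) * x1h k x = 1 := by
  unfold x1h
  have h1 : x ^ k ≠ 0 := (Real.rpow_pos_of_pos hx k).ne'
  have h2 : x + k + 1 ≠ 0 := by nlinarith
  rw [Real.exp_neg]
  field_simp

lemma x1_tendsto_poly_exp (s b c : ℝ) (hb : 0 < b) :
    Tendsto (fun x : ℝ => (x + c) * x ^ s * Real.exp (-b * x)) atTop (nhds 0) := by
  have h1 := tendsto_rpow_mul_exp_neg_mul_atTop_nhds_zero (s + 1) b hb
  have h2 := (tendsto_rpow_mul_exp_neg_mul_atTop_nhds_zero s b hb).const_mul c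
  have h3 := h1.add h2
  norm_num at h3
  refine h3.congr' ?_
  filter_upwards [eventually_gt_atTop 0] with x hx
  rw [Real.rpow_add hx, Real.rpow_one]; ring

/-- For `k > 0`, the second solution
`φ₂(x) = (x+k+1) · ∫₁^x (t+k)² e^t / ((t+k+1)² t^(k+1)) dt` satisfies
`x^k e^(-x) · φ₂(x) → 1` as `x → +∞`; that is, `φ₂(x) ~ e^x x^(-k)` at `∞`. -/
theorem x1_laguerre_phi2_asymptotics_at_infinity (k : ℝ) (hk : 0 < k)
    (φ₂ : ℝ → ℝ)
    (hφ₂ : ∀ x : ℝ, φ₂ x = (x + k + 1) *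
      ∫ t in (1 : ℝ)..x, (t + k) ^ 2 * Real.exp t / ((t + k + 1) ^ 2 * t ^ (k + 1))) :
    Filter.Tendsto (fun x : ℝ => x ^ k * Real.exp (-x) * φ₂ x)
      Filter.atTop (nhds 1) := by
  set L : ℝ → ℝ := fun x => 1 - x ^ k * Real.exp (-x) * (x + k + 1) * x1h k 1 with hLdef
  set U : ℝ → ℝ := fun x => L x + x ^ k * Real.exp (-x) * (x + k + 1) *
      (3 * k * Real.exp (x / 2) + 3 * k * (x / 2) ^ (-(k + 2)) * Real.exp x) with hUdef
  have h0 : Tendsto (fun x : ℝ => x ^ k * Real.exp (-x) * (x + k + 1) * x1h k 1)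
      atTop (nhds 0) := by
    have h := (x1_tendsto_poly_exp k 1 (k + 1) one_pos).mul_const (x1h k 1)
    rw [zero_mul] at h
    refine h.congr fun x => ?_
    rw [neg_one_mul]; ring
  have hLtend : Tendsto L atTop (nhds 1) := by
    have h1 : Tendsto (fun x : ℝ => (1:ℝ) - x ^ k * Real.exp (-x) * (x + k + 1) * x1h k 1)
        atTop (nhds (1 - 0)) := tendsto_const_nhds.sub h0
    norm_num at h1
    exact h1
  have hU2 : Tendsto (fun x : ℝ => x ^ k * Real.exp (-x) * (x + k + 1) *
      (3 * k * Real.exp (x / 2))) atTop (nhds 0) := by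
    have h := (x1_tendsto_poly_exp k (1/2) (k + 1) (by norm_num)).const_mul (3 * k)
    rw [mul_zero] at h
    refine h.congr fun x => ?_
    rw [show -(1/2 : ℝ) * x = -x + x / 2 by ring, Real.exp_add]; ring
  have hinv : Tendsto (fun x : ℝ => (x + k + 1) / x ^ 2) atTop (nhds 0) := by
    have h1 : Tendsto (fun x : ℝ => x⁻¹ + (k + 1) * (x ^ 2)⁻¹) atTop (nhds 0) := by
      have hp : Tendsto (fun x : ℝ => x ^ (2:ℕ)) atTop atTop :=
        tendsto_pow_atTop (by norm_num)
      have := tendsto_inv_atTop_zero.add ((hp.inv_tendsto_atTop).const_mul (k + 1))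
      norm_num at this; exact this
    refine h1.congr' ?_
    filter_upwards [eventually_gt_atTop 0] with x hx
    field_simp; ring
  have hU3 : Tendsto (fun x : ℝ => x ^ k * Real.exp (-x) * (x + k + 1) *
      (3 * k * (x / 2) ^ (-(k + 2)) * Real.exp x)) atTop (nhds 0) := by
    have h := hinv.const_mul (3 * k * 2 ^ (k + 2))
    rw [mul_zero] at h
    refine h.congr' ?_
    filter_upwards [eventually_gt_atTop 0] with x hx
    have hx2 : (0:ℝ) < x / 2 := by linarith
    have eexp : Real.exp (-x) * Real.exp x = 1 := by
      rw [← Real.exp_add]; simp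
    have e2 : x ^ k * (x / 2) ^ (-(k + 2)) = 2 ^ (k + 2) / x ^ 2 := by
      rw [Real.rpow_neg hx2.le, Real.div_rpow hx.le (by norm_num : (0:ℝ) ≤ 2)]
      have e1 : x ^ (k + 2) = x ^ k * x ^ 2 := by
        rw [show (k + 2 : ℝ) = k + ((2:ℕ):ℝ) by norm_num, Real.rpow_add hx,
          Real.rpow_natCast]
      rw [e1]
      have h1 : x ^ k ≠ 0 := (Real.rpow_pos_of_pos hx k).ne'
      have h2 : ((2:ℝ) ^ (k + 2)) ≠ 0 := (Real.rpow_pos_of_pos two_pos _).ne'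
      field_simp
    have : x ^ k * Real.exp (-x) * (x + k + 1) * (3 * k * (x / 2) ^ (-(k + 2)) * Real.exp x)
        = (x ^ k * (x / 2) ^ (-(k + 2))) * (Real.exp (-x) * Real.exp x)
          * ((x + k + 1) * (3 * k)) := by ring
    rw [this, eexp, e2]
    ring
  have hUtend : Tendsto U atTop (nhds 1) := by
    have := (hLtend.add hU2).add hU3
    norm_num at this
    refine this.congr fun x => ?_
    simp only [hUdef]; ring
  apply tendsto_of_tendsto_of_tendsto_of_le_of_le' hLtend hUtend
  · -- L ≤ target eventually
    filter_upwards [eventually_ge_atTop (2:ℝ)] with x hx2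
    have hx1 : (1:ℝ) ≤ x := by linarith
    have hx0 : (0:ℝ) < x := by linarith
    rw [hφ₂ x]
    have hG : (∫ t in (1:ℝ)..x, (t + k) ^ 2 * Real.exp t / ((t + k + 1) ^ 2 * t ^ (k + 1)))
        = ∫ t in (1:ℝ)..x, x1f k t := rfl
    rw [hG, x1_ftc k hk hx1]
    have ha : 0 ≤ x ^ k * Real.exp (-x) * (x + k + 1) :=
      mul_nonneg (mul_nonneg (Real.rpow_nonneg hx0.le k) (Real.exp_pos _).le) (by nlinarith)
    have hR0 : 0 ≤ ∫ t in (1:ℝ)..x, x1r k t :=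
      intervalIntegral.integral_nonneg hx1 fun t htm => x1r_nonneg k hk htm.1
    have hah := x1ah k hk hx0
    simp only [hLdef]
    nlinarith [mul_nonneg ha hR0]
  · -- target ≤ U eventually
    filter_upwards [eventually_ge_atTop (2:ℝ)] with x hx2
    have hx1 : (1:ℝ) ≤ x := by linarith
    have hx0 : (0:ℝ) < x := by linarith
    have hhalf1 : (1:ℝ) ≤ x / 2 := by linarith
    have hhalf0 : (0:ℝ) < x / 2 := by linarith
    rw [hφ₂ x]
    have hG : (∫ t in (1:ℝ)..x, (t + k) ^ 2 * Real.exp t / ((t + k + 1) ^ 2 * t ^ (k + 1)))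
        = ∫ t in (1:ℝ)..x, x1f k t := rfl
    rw [hG, x1_ftc k hk hx1]
    have ha : 0 ≤ x ^ k * Real.exp (-x) * (x + k + 1) :=
      mul_nonneg (mul_nonneg (Real.rpow_nonneg hx0.le k) (Real.exp_pos _).le) (by nlinarith)
    have hah := x1ah k hk hx0
    -- bound the remainder integral
    have hsub1 : Set.uIcc (1:ℝ) (x/2) ⊆ Set.Ici (1:ℝ) := by
      rw [Set.uIcc_of_le hhalf1]; exact Set.Icc_subset_Ici_self
    have hsub2 : Set.uIcc (x/2) x ⊆ Set.Ici (1:ℝ) := by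
      rw [Set.uIcc_of_le (by linarith : x/2 ≤ x)]
      exact fun t htm => le_trans hhalf1 htm.1
    have hint1 : IntervalIntegrable (x1r k) volume 1 (x/2) :=
      ((x1r_contOn k hk).mono hsub1).intervalIntegrable
    have hint2 : IntervalIntegrable (x1r k) volume (x/2) x :=
      ((x1r_contOn k hk).mono hsub2).intervalIntegrable
    have hsplit : (∫ t in (1:ℝ)..x, x1r k t)
        = (∫ t in (1:ℝ)..(x/2), x1r k t) + ∫ t in (x/2)..x, x1r k t :=
      (intervalIntegral.integral_add_adjacent_intervals hint1 hint2).symm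
    have hb1 : (∫ t in (1:ℝ)..(x/2), x1r k t) ≤ 3 * k * (Real.exp (x/2) - Real.exp 1) := by
      have hmono : (∫ t in (1:ℝ)..(x/2), x1r k t)
          ≤ ∫ t in (1:ℝ)..(x/2), 3 * k * Real.exp t := by
        apply intervalIntegral.integral_mono_on hhalf1 hint1
          ((continuous_const.mul Real.continuous_exp).intervalIntegrable 1 (x/2))
        intro t htm
        have ht1 : (1:ℝ) ≤ t := htm.1
        have ht0 : (0:ℝ) < t := lt_of_lt_of_le one_pos ht1
        have h1 : x1r k t ≤ 3 * k * Real.exp t / t ^ (k + 2) := x1r_le k hk ht1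
        have h2 : (1:ℝ) ≤ t ^ (k + 2) := by
          have := Real.rpow_le_rpow (by norm_num : (0:ℝ) ≤ 1) ht1 (by positivity : (0:ℝ) ≤ k + 2)
          rwa [Real.one_rpow] at this
        calc x1r k t ≤ 3 * k * Real.exp t / t ^ (k + 2) := h1
          _ ≤ 3 * k * Real.exp t := div_le_self (by positivity) h2
      rwa [intervalIntegral.integral_const_mul, integral_exp] at hmono
    have hb2 : (∫ t in (x/2)..x, x1r k t)
        ≤ 3 * k * (x/2) ^ (-(k + 2)) * (Real.exp x - Real.exp (x/2)) := by
      have hmono : (∫ t in (x/2)..x, x1r k t)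
          ≤ ∫ t in (x/2)..x, 3 * k * (x/2) ^ (-(k + 2)) * Real.exp t := by
        apply intervalIntegral.integral_mono_on (by linarith : x/2 ≤ x) hint2
          ((continuous_const.mul Real.continuous_exp).intervalIntegrable (x/2) x)
        intro t htm
        have ht1 : (1:ℝ) ≤ t := le_trans hhalf1 htm.1
        have ht0 : (0:ℝ) < t := lt_of_lt_of_le one_pos ht1
        have h1 : x1r k t ≤ 3 * k * Real.exp t / t ^ (k + 2) := x1r_le k hk ht1
        have h2 : (t ^ (k + 2))⁻¹ ≤ (x/2) ^ (-(k + 2)) := by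
          rw [Real.rpow_neg hhalf0.le]
          exact inv_anti₀ (Real.rpow_pos_of_pos hhalf0 _)
            (Real.rpow_le_rpow hhalf0.le htm.1 (by positivity))
        calc x1r k t ≤ 3 * k * Real.exp t / t ^ (k + 2) := h1
          _ = 3 * k * Real.exp t * (t ^ (k + 2))⁻¹ := by rw [div_eq_mul_inv]
          _ ≤ 3 * k * Real.exp t * ((x/2) ^ (-(k + 2))) :=
              mul_le_mul_of_nonneg_left h2 (by positivity)
          _ = 3 * k * (x/2) ^ (-(k + 2)) * Real.exp t := by ring
      rwa [intervalIntegral.integral_const_mul, integral_exp] at hmono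
    have hRB : (∫ t in (1:ℝ)..x, x1r k t)
        ≤ 3 * k * Real.exp (x/2) + 3 * k * (x/2) ^ (-(k + 2)) * Real.exp x := by
      rw [hsplit]
      have hp1 : (0:ℝ) < (x/2) ^ (-(k + 2)) := Real.rpow_pos_of_pos hhalf0 _
      nlinarith [Real.exp_pos (1:ℝ), Real.exp_pos (x/2),
        mul_pos (mul_pos (by linarith : (0:ℝ) < 3*k) hp1) (Real.exp_pos (x/2))]
    simp only [hUdef, hLdef]
    nlinarith [mul_le_mul_of_nonneg_left hRB ha]
  done
end
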